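/- Under the partition-of-unity/projection assumptions of the BDDC framework with N = 2 spaces, V₁ = U_I, V₂ = W̃_Γ (an a-orthogonal complement structure), Q₁ = I, Q₂ = (I-P)E, the condition number of the BDDC preconditioned operator satisfies κ ≤ max{ sup_{w ∈ W̃, w≠0} ‖(I-P)Ew‖_a² / ‖w‖_a² , 1 }. -/

import Mathlib

open RealInnerProductSpace

/-- Two-space multispace BDDC bound with `V₁ = U_I`, `V₂` the `a`-orthogonal
complement of `U_I` in `W̃`, `Q₁ = I`, `Q₂ = (I-P)E`: every eigenvalue `l` of
the preconditioned operator `BA` satisfies `1 ≤ l ≤ max{μ, 1}` whenever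
`μ` bounds the Rayleigh quotient `‖(I-P)Ew‖²/‖w‖²` on `W̃`; hence
`κ ≤ max{sup_w ‖(I-P)Ew‖²/‖w‖², 1}`. -/
theorem stmt9 {W : Type*} [NormedAddCommGroup W] [InnerProductSpace ℝ W]
    [FiniteDimensional ℝ W]
    (UI U Wt : Submodule ℝ W) (hUIU : UI ≤ U) (hUWt : U ≤ Wt)
    (E : W →ₗ[ℝ] W) (hE : ∀ w ∈ Wt, E w ∈ U) (hEid : ∀ u ∈ U, E u = u)
    (BA : W →ₗ[ℝ] W)
    (hBA : ∀ u ∈ U, ∃ v₂ ∈ Wt, (∀ z ∈ UI, ⟪v₂, z⟫ = 0) ∧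
      (∀ z ∈ Wt, (∀ y ∈ UI, ⟪z, y⟫ = 0) →
        ⟪v₂, z⟫ = ⟪u, E z - (Submodule.orthogonalProjection UI (E z) : W)⟫) ∧
      BA u = (Submodule.orthogonalProjection UI u : W) +
        (E v₂ - (Submodule.orthogonalProjection UI (E v₂) : W)))
    (μ : ℝ)
    (hμ : ∀ w ∈ Wt, ‖E w - (Submodule.orthogonalProjection UI (E w) : W)‖ ^ 2 ≤ μ * ‖w‖ ^ 2) :
    ∀ l : ℝ, (∃ u ∈ U, u ≠ 0 ∧ BA u = l • u) → 1 ≤ l ∧ l ≤ max μ 1 := by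
  rintro l ⟨u, hu, hu0, hl⟩
  obtain ⟨v₂, hv₂Wt, hv₂perp, hdual, hBAu⟩ := hBA u hu
  set p : W := (Submodule.orthogonalProjection UI u : W) with hp
  set r : W := u - p with hr
  have hpUI : p ∈ UI := (Submodule.orthogonalProjection UI u).2
  have hrperp : ∀ y ∈ UI, ⟪r, y⟫ = 0 := fun y hy =>
    Submodule.starProjection_inner_eq_zero u y hy
  have hrU : r ∈ U := Submodule.sub_mem U hu (hUIU hpUI)
  have hrWt : r ∈ Wt := hUWt hrU
  have hupr : u = p + r := by simp [hr]
  have hpr0 : ⟪p, r⟫ = 0 := by rw [real_inner_comm]; exact hrperp p hpUI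
  have hrp0 : ⟪r, p⟫ = 0 := hrperp p hpUI
  have hPr : (Submodule.orthogonalProjection UI r : W) = 0 := by
    have hmem : r ∈ UIᗮ := by
      rw [Submodule.mem_orthogonal]
      intro y hy; rw [real_inner_comm]; exact hrperp y hy
    rw [Submodule.orthogonalProjectionOnto_apply_of_mem_orthogonal hmem]
    simp
  have hEr : E r = r := hEid r hrU
  have h1 : ⟪v₂, r⟫ = ‖r‖ ^ 2 := by
    have h := hdual r hrWt hrperp
    rw [hEr, hPr, sub_zero] at h
    rw [h, hupr, inner_add_left, hpr0, zero_add, real_inner_self_eq_norm_sq]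
  set q : W := E v₂ - (Submodule.orthogonalProjection UI (E v₂) : W) with hq
  have hpq : ⟪p, q⟫ = 0 := by
    rw [real_inner_comm]
    exact Submodule.starProjection_inner_eq_zero (E v₂) p hpUI
  have h2 : ‖v₂‖ ^ 2 = ⟪r, q⟫ := by
    have h := hdual v₂ hv₂Wt hv₂perp
    rw [← hq, real_inner_self_eq_norm_sq] at h
    rw [h, hupr, inner_add_left, hpq, zero_add]
  have h4 : ‖u‖ ^ 2 = ‖p‖ ^ 2 + ‖r‖ ^ 2 := by
    rw [hupr, norm_add_sq_real, hpr0]; ring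
  have h3 : l * ‖u‖ ^ 2 = ‖p‖ ^ 2 + ‖v₂‖ ^ 2 := by
    have hBAl : p + q = l • u := by rw [← hBAu]; exact hl
    have hinner := congrArg (fun x => ⟪u, x⟫) hBAl
    simp only [inner_add_right, inner_smul_right] at hinner
    have hup : ⟪u, p⟫ = ‖p‖ ^ 2 := by
      rw [hupr, inner_add_left, real_inner_self_eq_norm_sq, hrp0, add_zero]
    have huq : ⟪u, q⟫ = ‖v₂‖ ^ 2 := by
      rw [hupr, inner_add_left, hpq, zero_add, ← h2]
    rw [hup, huq, real_inner_self_eq_norm_sq] at hinner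
    linarith
  have hu2 : 0 < ‖u‖ ^ 2 := pow_pos (norm_pos_iff.mpr hu0) 2
  have h5 : ‖r‖ ≤ ‖v₂‖ := by
    have hcs := real_inner_le_norm v₂ r
    nlinarith [norm_nonneg r, norm_nonneg v₂]
  have hr2 : ‖r‖ ^ 2 ≤ ‖v₂‖ ^ 2 := by
    have := pow_le_pow_left₀ (norm_nonneg r) h5 2
    simpa using this
  constructor
  · have hge : ‖u‖ ^ 2 ≤ l * ‖u‖ ^ 2 := by linarith
    have : 1 * ‖u‖ ^ 2 ≤ l * ‖u‖ ^ 2 := by linarith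
    exact le_of_mul_le_mul_right this hu2
  · by_cases hv0 : v₂ = 0
    · have hv : ‖v₂‖ ^ 2 = 0 := by rw [hv0]; simp
      have : l * ‖u‖ ^ 2 ≤ 1 * ‖u‖ ^ 2 := by nlinarith [sq_nonneg ‖r‖]
      have hl1 : l ≤ 1 := le_of_mul_le_mul_right this hu2
      exact hl1.trans (le_max_right μ 1)
    · have hv2pos : 0 < ‖v₂‖ := norm_pos_iff.mpr hv0
      have hcs := real_inner_le_norm r q
      have hq2 : ‖q‖ ^ 2 ≤ μ * ‖v₂‖ ^ 2 := hμ v₂ hv₂Wt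
      have hge : (0 : ℝ) ≤ ⟪r, q⟫ := h2 ▸ sq_nonneg ‖v₂‖
      have hA : ‖v₂‖ ^ 2 * ‖v₂‖ ^ 2 ≤ ‖r‖ ^ 2 * ‖q‖ ^ 2 := by
        have := mul_self_le_mul_self hge hcs
        rw [← h2] at this
        nlinarith [this]
      have hB : ‖r‖ ^ 2 * ‖q‖ ^ 2 ≤ ‖r‖ ^ 2 * (μ * ‖v₂‖ ^ 2) :=
        mul_le_mul_of_nonneg_left hq2 (sq_nonneg _)
      have hB' : ‖r‖ ^ 2 * (μ * ‖v₂‖ ^ 2) = (μ * ‖r‖ ^ 2) * ‖v₂‖ ^ 2 := by ring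
      have hC : ‖v₂‖ ^ 2 * ‖v₂‖ ^ 2 ≤ (μ * ‖r‖ ^ 2) * ‖v₂‖ ^ 2 := by linarith
      have hkey : ‖v₂‖ ^ 2 ≤ μ * ‖r‖ ^ 2 :=
        le_of_mul_le_mul_right hC (pow_pos hv2pos 2)
      have hmax1 : (1 : ℝ) ≤ max μ 1 := le_max_right μ 1
      have hmaxμ : μ ≤ max μ 1 := le_max_left μ 1
      have e1 : μ * ‖r‖ ^ 2 ≤ max μ 1 * ‖r‖ ^ 2 :=
        mul_le_mul_of_nonneg_right hmaxμ (sq_nonneg _)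
      have e2 : ‖p‖ ^ 2 ≤ max μ 1 * ‖p‖ ^ 2 := le_mul_of_one_le_left (sq_nonneg _) hmax1
      have e3 : max μ 1 * ‖u‖ ^ 2 = max μ 1 * ‖p‖ ^ 2 + max μ 1 * ‖r‖ ^ 2 := by
        rw [h4]; ring
      have : l * ‖u‖ ^ 2 ≤ max μ 1 * ‖u‖ ^ 2 := by linarith
      exact le_of_mul_le_mul_right this hu2
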